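/- Let G ∈ ℝ^{n×n}, P ≻ 0 with PG + Gᵀ P ≻ 0. Then for every x ∈ ℝ^n with x ≠ 0 there exists a unique s ∈ ℝ such that ‖e^{-sG} x‖_P = 1. -/

import Mathlib

open Matrix

attribute [local instance] Matrix.linftyOpNormedRing Matrix.linftyOpNormedAlgebra

private lemma quad_lower {n : ℕ} (P Q : Matrix (Fin n) (Fin n) ℝ) (hP : P.PosDef)
    (hQ : Q.PosDef) :
    ∃ α : ℝ, 0 < α ∧ ∀ y : Fin n → ℝ, α * (y ⬝ᵥ P *ᵥ y) ≤ y ⬝ᵥ Q *ᵥ y := by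
  rcases Nat.eq_zero_or_pos n with hn | hn
  · refine ⟨1, one_pos, fun y => ?_⟩
    subst hn
    simp [dotProduct]
  have hsph : IsCompact (Metric.sphere (0 : Fin n → ℝ) 1) := isCompact_sphere 0 1
  have hne : (Metric.sphere (0 : Fin n → ℝ) 1).Nonempty := by
    have : Nontrivial (Fin n → ℝ) := by
      have : Nonempty (Fin n) := ⟨⟨0, hn⟩⟩
      infer_instance
    exact NormedSpace.sphere_nonempty.2 zero_le_one
  have hpc : Continuous fun y : Fin n → ℝ => y ⬝ᵥ P *ᵥ y := by continuity
  have hqc : Continuous fun y : Fin n → ℝ => y ⬝ᵥ Q *ᵥ y := by continuity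
  obtain ⟨u0, hu0, hqmin⟩ := hsph.exists_isMinOn hne hqc.continuousOn
  obtain ⟨u1, hu1, hpmax⟩ := hsph.exists_isMaxOn hne hpc.continuousOn
  have hu0ne : u0 ≠ 0 := by
    intro h; rw [h] at hu0; simp at hu0
  have hu1pos : 0 < u1 ⬝ᵥ P *ᵥ u1 := by
    simpa using hP.dotProduct_mulVec_pos (x := u1) (by intro h; rw [h] at hu1; simp at hu1)
  set qm := u0 ⬝ᵥ Q *ᵥ u0 with hqm
  set pm := u1 ⬝ᵥ P *ᵥ u1 with hpm
  have hqmpos : 0 < qm := by simpa [hqm] using hQ.dotProduct_mulVec_pos (x := u0) hu0ne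
  refine ⟨qm / pm, div_pos hqmpos hu1pos, fun y => ?_⟩
  rcases eq_or_ne y 0 with rfl | hy
  · simp
  · set u : Fin n → ℝ := ‖y‖⁻¹ • y with hu
    have hnorm : ‖y‖ ≠ 0 := norm_ne_zero_iff.2 hy
    have husph : u ∈ Metric.sphere (0 : Fin n → ℝ) 1 := by
      simp [hu, norm_smul, abs_of_nonneg (inv_nonneg.2 (norm_nonneg y)), inv_mul_cancel₀ hnorm]
    have hyu : y = ‖y‖ • u := by
      rw [hu, smul_smul, mul_inv_cancel₀ hnorm, one_smul]
    have hsc : ∀ (A : Matrix (Fin n) (Fin n) ℝ) (c : ℝ) (v : Fin n → ℝ),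
        (c • v) ⬝ᵥ A *ᵥ (c • v) = c^2 * (v ⬝ᵥ A *ᵥ v) := by
      intro A c v
      simp only [Matrix.mulVec_smul, smul_dotProduct, dotProduct_smul,
        smul_eq_mul]
      ring
    have hscaleP : y ⬝ᵥ P *ᵥ y = ‖y‖^2 * (u ⬝ᵥ P *ᵥ u) := by
      conv_lhs => rw [hyu]
      exact hsc P ‖y‖ u
    have hscaleQ : y ⬝ᵥ Q *ᵥ y = ‖y‖^2 * (u ⬝ᵥ Q *ᵥ u) := by
      conv_lhs => rw [hyu]
      exact hsc Q ‖y‖ u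
    rw [hscaleP, hscaleQ]
    have h1 : qm / pm * (u ⬝ᵥ P *ᵥ u) ≤ qm := by
      rw [div_mul_eq_mul_div, div_le_iff₀ hu1pos]
      have h3 : u ⬝ᵥ P *ᵥ u ≤ pm := hpmax husph
      nlinarith [hqmpos.le]
    have h2 : qm ≤ u ⬝ᵥ Q *ᵥ u := hqmin husph
    have hn2 : (0:ℝ) ≤ ‖y‖^2 := sq_nonneg _
    nlinarith

private lemma dot_conj {n : ℕ} (F A : Matrix (Fin n) (Fin n) ℝ) (x : Fin n → ℝ) :
    x ⬝ᵥ (Fᵀ * A * F) *ᵥ x = (F *ᵥ x) ⬝ᵥ A *ᵥ (F *ᵥ x) := by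
  rw [← Matrix.mulVec_mulVec, ← Matrix.mulVec_mulVec, Matrix.dotProduct_mulVec x,
    Matrix.vecMul_transpose]

/-- Weighted Euclidean norm `‖x‖_P = √(xᵀ P x)`. -/
noncomputable def wnorm {n : ℕ} (P : Matrix (Fin n) (Fin n) ℝ) (x : Fin n → ℝ) : ℝ :=
  Real.sqrt (x ⬝ᵥ P *ᵥ x)

theorem stmt3 {n : ℕ} (G P : Matrix (Fin n) (Fin n) ℝ)
    (hP : P.PosDef) (hmono : (P * G + Gᵀ * P).PosDef)
    (x : Fin n → ℝ) (hx : x ≠ 0) :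
    ∃! s : ℝ, wnorm P (NormedSpace.exp ((-s) • G) *ᵥ x) = 1 := by
  classical
  set Q : Matrix (Fin n) (Fin n) ℝ := P * G + Gᵀ * P with hQdef
  set F : ℝ → Matrix (Fin n) (Fin n) ℝ := fun t => NormedSpace.exp (t • (-G)) with hF
  have hFs : ∀ s : ℝ, NormedSpace.exp ((-s) • G) = F s := by
    intro s; rw [hF]; congr 1; rw [neg_smul, smul_neg]
  set y : ℝ → Fin n → ℝ := fun s => F s *ᵥ x with hy
  set f : ℝ → ℝ := fun s => y s ⬝ᵥ P *ᵥ y s with hf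
  -- y never vanishes
  have hinv : ∀ s : ℝ, F (-s) * F s = 1 := by
    intro s
    have hc : Commute ((-s) • (-G)) (s • (-G)) :=
      ((Commute.refl (-G)).smul_left (-s)).smul_right s
    rw [hF]
    beta_reduce
    rw [← Matrix.exp_add_of_commute _ _ hc, ← add_smul, neg_add_cancel, zero_smul,
      NormedSpace.exp_zero]
  have hyne : ∀ s : ℝ, y s ≠ 0 := by
    intro s h
    apply hx
    have : (F (-s) * F s) *ᵥ x = F (-s) *ᵥ (F s *ᵥ x) := by
      rw [← Matrix.mulVec_mulVec]
    rw [hinv s, Matrix.one_mulVec] at this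
    rw [this]
    show F (-s) *ᵥ y s = 0
    rw [h, Matrix.mulVec_zero]
  have hfpos : ∀ s : ℝ, 0 < f s := fun s => by simpa using hP.dotProduct_mulVec_pos (x := y s) (hyne s)
  -- derivative of f
  have hderiv : ∀ s : ℝ, HasDerivAt f (-(y s ⬝ᵥ Q *ᵥ y s)) s := by
    intro s
    have hFd : HasDerivAt F ((-G) * F s) s := hasDerivAt_exp_smul_const' (-G) s
    have hTd : HasDerivAt (fun t => (F t)ᵀ) (((-G) * F s)ᵀ) s := by
      have := ((Matrix.transposeLinearEquiv (Fin n) (Fin n) ℝ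
        ℝ).toLinearMap.toContinuousLinearMap).hasFDerivAt.comp_hasDerivAt s hFd
      exact this
    have hMd : HasDerivAt (fun t => (F t)ᵀ * P * F t)
        (((-G) * F s)ᵀ * P * F s + (F s)ᵀ * P * ((-G) * F s)) s := (hTd.mul_const P).mul hFd
    let L : Matrix (Fin n) (Fin n) ℝ →ₗ[ℝ] ℝ :=
      { toFun := fun M => x ⬝ᵥ M *ᵥ x
        map_add' := by intro A B; simp [Matrix.add_mulVec, dotProduct_add]
        map_smul' := by intro c A; simp [Matrix.smul_mulVec, dotProduct_smul] }
    have hLd := (L.toContinuousLinearMap.hasFDerivAt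
      (x := (F s)ᵀ * P * F s)).comp_hasDerivAt s hMd
    have hmat : ((-G) * F s)ᵀ * P * F s + (F s)ᵀ * P * ((-G) * F s)
        = -((F s)ᵀ * Q * F s) := by
      rw [hQdef]
      simp only [Matrix.transpose_mul, Matrix.transpose_neg, Matrix.neg_mul, Matrix.mul_neg,
        Matrix.mul_add, Matrix.add_mul, Matrix.mul_assoc]
      abel
    have hval : L (((-G) * F s)ᵀ * P * F s + (F s)ᵀ * P * ((-G) * F s))
        = -(y s ⬝ᵥ Q *ᵥ y s) := by
      rw [hmat]
      show x ⬝ᵥ (-((F s)ᵀ * Q * F s)) *ᵥ x = _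
      rw [Matrix.neg_mulVec, dotProduct_neg, dot_conj]
    have hfun : (fun t => L ((F t)ᵀ * P * F t)) = f := by
      funext t
      show x ⬝ᵥ ((F t)ᵀ * P * F t) *ᵥ x = f t
      rw [dot_conj]
    rw [← hval, ← hfun]
    exact hLd
  have hqpos : ∀ s : ℝ, 0 < y s ⬝ᵥ Q *ᵥ y s := fun s => by
    simpa using hmono.dotProduct_mulVec_pos (x := y s) (hyne s)
  have hdf : Differentiable ℝ f := fun s => (hderiv s).differentiableAt
  have hstrict : StrictAnti f := by
    apply strictAnti_of_deriv_neg
    intro s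
    rw [(hderiv s).deriv]
    exact neg_neg_iff_pos.2 (hqpos s)
  -- lower bound on decay rate
  obtain ⟨α, hα, hαle⟩ := quad_lower P Q hP hmono
  set g : ℝ → ℝ := fun s => Real.log (f s) with hg
  have hgd : ∀ s : ℝ, HasDerivAt g (-(y s ⬝ᵥ Q *ᵥ y s) / f s) s := fun s =>
    (hderiv s).log (ne_of_gt (hfpos s))
  set φ : ℝ → ℝ := fun s => g s + α * s with hφ
  have hφd : ∀ s : ℝ, HasDerivAt φ (-(y s ⬝ᵥ Q *ᵥ y s) / f s + α) s := by
    intro s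
    exact (hgd s).add (by simpa using (hasDerivAt_id s).const_mul α)
  have hφanti : Antitone φ := by
    apply antitone_of_deriv_nonpos (fun s => (hφd s).differentiableAt)
    intro s
    rw [(hφd s).deriv]
    have h1 : α * f s ≤ y s ⬝ᵥ Q *ᵥ y s := hαle (y s)
    have h2 : α ≤ (y s ⬝ᵥ Q *ᵥ y s) / f s := (le_div_iff₀ (hfpos s)).2 h1
    have : -(y s ⬝ᵥ Q *ᵥ y s) / f s = -((y s ⬝ᵥ Q *ᵥ y s) / f s) := by ring
    rw [this]
    linarith
  -- pick endpoints
  set s1 : ℝ := max 1 (g 0 / α + 1) with hs1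
  set s0 : ℝ := min (-1) (g 0 / α - 1) with hs0
  have hs01 : s0 < s1 := lt_of_le_of_lt (min_le_left _ _)
    (lt_of_lt_of_le (by norm_num) (le_max_left _ _))
  have hgs1 : g s1 < 0 := by
    have h1 : φ s1 ≤ φ 0 := hφanti (le_trans zero_le_one (le_max_left _ _))
    have h2 : g 0 / α + 1 ≤ s1 := le_max_right _ _
    have h3 : g 0 + α ≤ α * s1 := by
      have h4 := mul_le_mul_of_nonneg_left h2 hα.le
      calc g 0 + α = α * (g 0 / α + 1) := by field_simp
        _ ≤ α * s1 := h4
    have : φ s1 = g s1 + α * s1 := rfl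
    have h0 : φ 0 = g 0 := by simp [hφ]
    nlinarith [hα]
  have hgs0 : 0 < g s0 := by
    have h1 : φ 0 ≤ φ s0 := hφanti (le_trans (min_le_left _ _) (by norm_num))
    have h2 : s0 ≤ g 0 / α - 1 := min_le_right _ _
    have h3 : α * s0 ≤ g 0 - α := by
      have := mul_le_mul_of_nonneg_left h2 hα.le
      calc α * s0 ≤ α * (g 0 / α - 1) := this
        _ = g 0 - α := by field_simp
    have h0 : φ 0 = g 0 := by simp [hφ]
    have : φ s0 = g s0 + α * s0 := rfl
    nlinarith [hα]
  have hfs1 : f s1 < 1 := (Real.log_neg_iff (hfpos s1)).1 hgs1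
  have hfs0 : 1 < f s0 := (Real.log_pos_iff (hfpos s0).le).1 hgs0
  -- IVT
  have hcont : ContinuousOn f (Set.Icc s0 s1) := hdf.continuous.continuousOn
  have hivt := intermediate_value_Icc' hs01.le hcont
  have h1mem : (1:ℝ) ∈ Set.Icc (f s1) (f s0) := ⟨hfs1.le, hfs0.le⟩
  obtain ⟨s, _, hsval⟩ := hivt h1mem
  -- characterize the condition
  have hiff : ∀ t : ℝ, wnorm P (NormedSpace.exp ((-t) • G) *ᵥ x) = 1 ↔ f t = 1 := by
    intro t
    rw [wnorm, hFs t]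
    constructor
    · intro h
      have : f t = f t := rfl
      have := Real.sqrt_eq_one.1 h
      exact this
    · intro h
      show Real.sqrt (y t ⬝ᵥ P *ᵥ y t) = 1
      rw [show y t ⬝ᵥ P *ᵥ y t = f t from rfl, h, Real.sqrt_one]
  refine ⟨s, (hiff s).2 hsval, fun t ht => ?_⟩
  exact hstrict.injective (((hiff t).1 ht).trans hsval.symm)
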